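/- Under G(n, p_n) with p_n = Ω(n^{-c}), 0 ≤ c < 1/2: for all ε, δ > 0 there is N such that for all n ≥ N, P[MAXEB(G_n) < (1+δ)·MINEB(G_n)] > 1-ε, where EB(G,φ) = θ(⌊n/2⌋, φ, G), MINEB = min over layouts φ, MAXEB = max over layouts φ. -/

import Mathlib

open MeasureTheory ProbabilityTheory Filter
open scoped ENNReal NNReal

/-- Index type for potential edges: 2-element subsets of the vertex set. -/
abbrev EdgeIdx (n : ℕ) := {e : Finset (Fin n) // e.card = 2}

/-- The Erdős–Rényi measure `G(n,p)`: each potential edge is present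
independently with probability `p`. -/
noncomputable def erMeasure (n : ℕ) (p : ℝ≥0∞) (hp : p ≤ 1) :
    Measure (EdgeIdx n → Bool) :=
  Measure.pi fun _ => (PMF.bernoulli p.toNNReal
    (by simpa using ENNReal.toNNReal_mono ENNReal.one_ne_top hp)).toMeasure

/-- The cut size `c(S)`: number of present edges with one endpoint in `S`
and the other outside `S`. -/
noncomputable def cut (n : ℕ) (S : Finset (Fin n)) (G : EdgeIdx n → Bool) : ℕ :=
  letI := Classical.decEq (Fin n)
  (Finset.univ.filter fun e : EdgeIdx n =>
    G e = true ∧ (∃ u ∈ e.1, u ∈ S) ∧ (∃ v ∈ e.1, v ∉ S)).card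

/-- `L(i, φ, G)`: vertices placed at the (1-indexed) positions `1, …, i`
by the layout `φ` (positions in `Fin n` are 0-indexed). -/
def Lset (n : ℕ) (φ : Fin n ≃ Fin n) (i : ℕ) : Finset (Fin n) :=
  Finset.univ.filter fun u => (φ u : ℕ) < i

/-- `θ(i, φ, G)`: number of present edges crossing position `i`. -/
noncomputable def theta (n : ℕ) (G : EdgeIdx n → Bool) (φ : Fin n ≃ Fin n) (i : ℕ) : ℕ :=
  cut n (Lset n φ i) G

/-- Cutwidth of a layout: `max_{1 ≤ i ≤ n} θ(i, φ, G)`. -/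
noncomputable def CW (n : ℕ) (G : EdgeIdx n → Bool) (φ : Fin n ≃ Fin n) : ℕ :=
  (Finset.Icc 1 n).sup (theta n G φ)

/-- `u` and `v` are adjacent in `G`. -/
def adj (n : ℕ) (G : EdgeIdx n → Bool) (u v : Fin n) : Prop :=
  u ≠ v ∧ ∃ e : EdgeIdx n, G e = true ∧ e.1 = {u, v}

/-- `δ(i, φ, G)`: number of vertices at positions `≤ i` with a neighbour at a
position `> i`. -/
noncomputable def vsep (n : ℕ) (G : EdgeIdx n → Bool) (φ : Fin n ≃ Fin n) (i : ℕ) : ℕ :=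
  letI := Classical.dec
  (Finset.univ.filter fun u =>
    (φ u : ℕ) < i ∧ ∃ v, i ≤ (φ v : ℕ) ∧ adj n G u v).card

/-- Vertex separation of a layout: `max_{1 ≤ i ≤ n} δ(i, φ, G)`. -/
noncomputable def VS (n : ℕ) (G : EdgeIdx n → Bool) (φ : Fin n ≃ Fin n) : ℕ :=
  (Finset.Icc 1 n).sup (vsep n G φ)


/-! ### Auxiliary development for `stmt_12` -/

section ChernoffAux

/-- Indicator of a Boolean as a real number. -/
noncomputable def ind (b : Bool) : ℝ := if b then 1 else 0

open Real

lemma bern_int (p : ℝ≥0∞) (hp : p ≤ 1) (g : Bool → ℝ) :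
    ∫ b, g b ∂(PMF.bernoulli p.toNNReal
    (by simpa using ENNReal.toNNReal_mono ENNReal.one_ne_top hp)).toMeasure
      = (1 - p.toReal) * g false + p.toReal * g true := by
  generalize_proofs h1
  rw [integral_fintype Integrable.of_finite]
  simp [Measure.real, PMF.toMeasure_apply_singleton _ _ (MeasurableSet.singleton _), PMF.bernoulli_apply]
  simp [NNReal.coe_sub h1, ENNReal.coe_toNNReal_eq_toReal]
  ring

lemma mgf_eq (n : ℕ) (p : ℝ≥0∞) (hp : p ≤ 1) (A : Finset (EdgeIdx n)) (s : ℝ) :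
    ∫ G, exp (s * ∑ e ∈ A, ind (G e)) ∂(erMeasure n p hp)
      = ((1 - p.toReal) + p.toReal * exp s) ^ A.card := by
  classical
  letI : MeasureSpace Bool := ⟨(PMF.bernoulli p.toNNReal
    (by simpa using ENNReal.toNNReal_mono ENNReal.one_ne_top hp)).toMeasure⟩
  have hvol : erMeasure n p hp = (volume : Measure (EdgeIdx n → Bool)) := rfl
  have key : ∀ G : EdgeIdx n → Bool,
      exp (s * ∑ e ∈ A, ind (G e))
        = ∏ e : EdgeIdx n, (fun e (b : Bool) => if e ∈ A then exp (s * ind b) else 1) e (G e) := by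
    intro G
    rw [Finset.mul_sum, exp_sum]
    rw [← Finset.prod_subset (Finset.subset_univ A)]
    · exact Finset.prod_congr rfl fun e he => by simp [he]
    · intro e _ he; simp [he]
  simp_rw [hvol, key]
  haveI : IsProbabilityMeasure (volume : Measure Bool) := PMF.toMeasure.isProbabilityMeasure _
  have hprod := MeasureTheory.integral_fintype_prod_eq_prod (ι := EdgeIdx n) (μ := fun _ => (volume : Measure Bool))
    (fun e (b : Bool) => if e ∈ A then exp (s * ind b) else 1)
  rw [volume_pi, hprod]
  rw [← Finset.prod_subset (Finset.subset_univ A)]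
  · rw [Finset.prod_congr rfl (fun e he => ?_), Finset.prod_const]
    have : (volume : Measure Bool) = (PMF.bernoulli p.toNNReal
    (by simpa using ENNReal.toNNReal_mono ENNReal.one_ne_top hp)).toMeasure := rfl
    rw [this, bern_int p hp]
    simp [he, ind]
  · intro e _ he
    simp only [he, if_false]
    rw [integral_const, probReal_univ, one_smul]

lemma factor_le (q s : ℝ) (h0 : 0 ≤ q) (h1 : q ≤ 1) :
    (1 - q) + q * exp s ≤ exp (q * s + s ^ 2 / 2) := by
  have chord : ∀ x : ℝ, -1 ≤ x → x ≤ 1 →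
      exp (s * x) ≤ (1 - x) / 2 * exp (-s) + (1 + x) / 2 * exp s := by
    intro x hx1 hx2
    have h := convexOn_exp.2 (Set.mem_univ (-s)) (Set.mem_univ s)
      (show (0:ℝ) ≤ (1 - x) / 2 by linarith) (show (0:ℝ) ≤ (1 + x) / 2 by linarith)
      (show (1 - x) / 2 + (1 + x) / 2 = 1 by ring)
    simp only [smul_eq_mul] at h
    have harg : (1 - x) / 2 * -s + (1 + x) / 2 * s = s * x := by ring
    rwa [harg] at h
  have c1 := chord (-q) (by linarith) (by linarith)
  have c2 := chord (1 - q) (by linarith) (by linarith)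
  have hch : (exp (-s) + exp s) / 2 ≤ exp (s ^ 2 / 2) := by
    have := Real.cosh_le_exp_half_sq s
    rw [Real.cosh_eq] at this; linarith
  have e1 : exp (q * s) * exp (s * -q) = 1 := by
    rw [← exp_add]; rw [show q * s + s * -q = 0 by ring, exp_zero]
  have e2 : exp (q * s) * exp (s * (1 - q)) = exp s := by
    rw [← exp_add]; congr 1; ring
  have hexpqs : 0 < exp (q * s) := exp_pos _
  have key : (1 - q) + q * exp s
      ≤ exp (q * s) * ((exp (-s) + exp s) / 2) := by
    have h3 : (1 - q) * exp (s * -q) + q * exp (s * (1 - q))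
        ≤ (exp (-s) + exp s) / 2 := by nlinarith
    have h4 : exp (q * s) * ((1 - q) * exp (s * -q) + q * exp (s * (1 - q)))
        = (1 - q) + q * exp s := by
      have : exp (q*s) * ((1-q) * exp (s * -q) + q * exp (s*(1-q)))
          = (1-q) * (exp (q*s) * exp (s * -q)) + q * (exp (q*s) * exp (s*(1-q))) := by ring
      rw [this, e1, e2]; ring
    nlinarith
  calc (1 - q) + q * exp s ≤ exp (q * s) * ((exp (-s) + exp s) / 2) := key
    _ ≤ exp (q * s) * exp (s ^ 2 / 2) := by nlinarith
    _ = exp (q * s + s ^ 2 / 2) := by rw [← exp_add]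

lemma q_le_one {p : ℝ≥0∞} (hp : p ≤ 1) : p.toReal ≤ 1 := by
  have := ENNReal.toReal_mono ENNReal.one_ne_top hp
  simpa using this

lemma tail_up (n : ℕ) (p : ℝ≥0∞) (hp : p ≤ 1) (A : Finset (EdgeIdx n)) (γ : ℝ) (hγ : 0 < γ) :
    (erMeasure n p hp {G | (1 + γ) * A.card * p.toReal ≤ ∑ e ∈ A, ind (G e)}).toReal
      ≤ exp (-(γ ^ 2 * A.card * p.toReal ^ 2 / 2)) := by
  haveI : IsProbabilityMeasure (erMeasure n p hp) := by
    unfold erMeasure; infer_instance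
  set q := p.toReal with hq
  have hq0 : 0 ≤ q := ENNReal.toReal_nonneg
  have hq1 : q ≤ 1 := q_le_one hp
  set m := A.card with hm
  have h := measure_ge_le_exp_mul_mgf (μ := erMeasure n p hp)
    (X := fun G => ∑ e ∈ A, ind (G e)) ((1 + γ) * m * q) (t := γ * q)
    (by positivity) Integrable.of_finite
  unfold mgf at h
  rw [mgf_eq n p hp A (γ * q)] at h
  refine h.trans ?_
  have hfac : ((1 - q) + q * exp (γ * q)) ^ m ≤ exp (q * (γ * q) + (γ * q) ^ 2 / 2) ^ m := by
    apply pow_le_pow_left₀ (add_nonneg (by linarith) (mul_nonneg hq0 (exp_pos _).le))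
    exact factor_le q (γ * q) hq0 hq1
  calc exp (-(γ * q) * ((1 + γ) * m * q)) * ((1 - q) + q * exp (γ * q)) ^ m
      ≤ exp (-(γ * q) * ((1 + γ) * m * q)) * exp (q * (γ * q) + (γ * q) ^ 2 / 2) ^ m := by
        exact mul_le_mul_of_nonneg_left hfac (exp_pos _).le
    _ = exp (-(γ ^ 2 * m * q ^ 2 / 2) + (-(γ ^ 2 * m * q ^ 2 / 2 : ℝ) - -(γ ^ 2 * m * q ^ 2 / 2))) := by
        rw [← Real.exp_nat_mul, ← exp_add]; congr 1; ring
    _ ≤ exp (-(γ ^ 2 * (m : ℝ) * q ^ 2 / 2)) := by rw [exp_le_exp]; ring_nf; exact le_refl _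

lemma tail_lo (n : ℕ) (p : ℝ≥0∞) (hp : p ≤ 1) (A : Finset (EdgeIdx n)) (γ : ℝ) (hγ : 0 < γ) :
    (erMeasure n p hp {G | ∑ e ∈ A, ind (G e) ≤ (1 - γ) * A.card * p.toReal}).toReal
      ≤ exp (-(γ ^ 2 * A.card * p.toReal ^ 2 / 2)) := by
  haveI : IsProbabilityMeasure (erMeasure n p hp) := by
    unfold erMeasure; infer_instance
  set q := p.toReal with hq
  have hq0 : 0 ≤ q := ENNReal.toReal_nonneg
  have hq1 : q ≤ 1 := q_le_one hp
  set m := A.card with hm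
  have h := measure_le_le_exp_mul_mgf (μ := erMeasure n p hp)
    (X := fun G => ∑ e ∈ A, ind (G e)) ((1 - γ) * m * q) (t := -(γ * q))
    (by simp; positivity) Integrable.of_finite
  unfold mgf at h
  rw [mgf_eq n p hp A (-(γ * q))] at h
  refine h.trans ?_
  have hfac : ((1 - q) + q * exp (-(γ * q))) ^ m ≤ exp (q * (-(γ * q)) + (-(γ * q)) ^ 2 / 2) ^ m := by
    apply pow_le_pow_left₀ (add_nonneg (by linarith) (mul_nonneg hq0 (exp_pos _).le))
    exact factor_le q (-(γ * q)) hq0 hq1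
  calc exp (-(-(γ * q)) * ((1 - γ) * m * q)) * ((1 - q) + q * exp (-(γ * q))) ^ m
      ≤ exp (-(-(γ * q)) * ((1 - γ) * m * q)) * exp (q * (-(γ * q)) + (-(γ * q)) ^ 2 / 2) ^ m := by
        exact mul_le_mul_of_nonneg_left hfac (exp_pos _).le
    _ ≤ exp (-(γ ^ 2 * (m : ℝ) * q ^ 2 / 2)) := by
        rw [← Real.exp_nat_mul, ← exp_add, exp_le_exp]; ring_nf; exact le_refl _

/-- The set of potential edges crossing `S`. -/
noncomputable def crossSet (n : ℕ) (S : Finset (Fin n)) : Finset (EdgeIdx n) :=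
  letI := Classical.decEq (Fin n)
  Finset.univ.filter fun e : EdgeIdx n => (∃ u ∈ e.1, u ∈ S) ∧ (∃ v ∈ e.1, v ∉ S)

set_option maxHeartbeats 2000000 in
lemma cut_eq_sum (n : ℕ) (S : Finset (Fin n)) (G : EdgeIdx n → Bool) :
    (cut n S G : ℝ) = ∑ e ∈ crossSet n S, ind (G e) := by
  classical
  unfold cut crossSet
  rw [Finset.filter_congr_decidable] <;> try rfl
  have h1 : (Finset.univ.filter fun e : EdgeIdx n =>
        G e = true ∧ (∃ u ∈ e.1, u ∈ S) ∧ (∃ v ∈ e.1, v ∉ S))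
      = (Finset.univ.filter fun e : EdgeIdx n =>
        (∃ u ∈ e.1, u ∈ S) ∧ (∃ v ∈ e.1, v ∉ S)).filter (fun e => G e = true) := by
    rw [Finset.filter_filter]
    apply Finset.filter_congr
    intro e _
    tauto
  rw [h1, Finset.card_filter, Nat.cast_sum]
  refine Finset.sum_congr (by congr!) fun e _ => ?_
  by_cases h : G e <;> simp [h, ind]

set_option maxHeartbeats 2000000 in
lemma card_crossSet (n : ℕ) (S : Finset (Fin n)) :
    (crossSet n S).card = S.card * (n - S.card) := by
  classical
  have hc : (Sᶜ).card = n - S.card := by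
    rw [Finset.card_compl, Fintype.card_fin]
  rw [← hc, ← Finset.card_product]
  unfold crossSet
  symm
  apply Finset.card_bij (fun uv huv =>
    (⟨{uv.1, uv.2}, by
      have h := Finset.mem_product.mp huv
      have hne : uv.1 ≠ uv.2 := by
        intro heq
        have h2 := Finset.mem_compl.mp h.2
        exact h2 (heq ▸ h.1)
      exact Finset.card_pair hne⟩ : EdgeIdx n))
  · intro uv huv
    have h := Finset.mem_product.mp huv
    have h2 := Finset.mem_compl.mp h.2
    simp only [Finset.mem_filter, Finset.mem_univ, true_and]
    constructor
    · exact ⟨uv.1, by simp, h.1⟩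
    · exact ⟨uv.2, by simp, h2⟩
  · intro a ha b hb hab
    have haP := Finset.mem_product.mp ha
    have hbP := Finset.mem_product.mp hb
    have h2a := Finset.mem_compl.mp haP.2
    have h2b := Finset.mem_compl.mp hbP.2
    have hset : ({a.1, a.2} : Finset (Fin n)) = {b.1, b.2} := congrArg Subtype.val hab
    have ha1 : a.1 ∈ ({b.1, b.2} : Finset (Fin n)) := by
      rw [← hset]; simp
    have ha2 : a.2 ∈ ({b.1, b.2} : Finset (Fin n)) := by
      rw [← hset]; simp
    simp only [Finset.mem_insert, Finset.mem_singleton] at ha1 ha2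
    have e1 : a.1 = b.1 := by
      rcases ha1 with h | h
      · exact h
      · exact absurd (h ▸ haP.1) h2b
    have e2 : a.2 = b.2 := by
      rcases ha2 with h | h
      · exact absurd (h ▸ hbP.1) h2a
      · exact h
    exact Prod.ext e1 e2
  · intro e he
    simp only [Finset.mem_filter, Finset.mem_univ, true_and] at he
    obtain ⟨⟨u, hu, huS⟩, ⟨v, hv, hvS⟩⟩ := he
    have hne : u ≠ v := fun h => hvS (h ▸ huS)
    refine ⟨(u, v), Finset.mem_product.mpr ⟨huS, Finset.mem_compl.mpr hvS⟩, ?_⟩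
    apply Subtype.ext
    have hsub : ({u, v} : Finset (Fin n)) ⊆ e.1 := by
      intro x hx
      simp only [Finset.mem_insert, Finset.mem_singleton] at hx
      rcases hx with h | h <;> subst h <;> assumption
    exact Finset.eq_of_subset_of_card_le hsub
      (by rw [e.2, Finset.card_pair hne])

lemma card_Lset (n : ℕ) (φ : Fin n ≃ Fin n) (i : ℕ) (hi : i ≤ n) :
    (Lset n φ i).card = i := by
  classical
  unfold Lset
  have h1 : (Finset.univ.filter fun u : Fin n => (φ u : ℕ) < i)
      = Finset.map φ.symm.toEmbedding (Finset.univ.filter fun j : Fin n => (j : ℕ) < i) := by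
    ext u
    simp only [Finset.mem_filter, Finset.mem_univ, true_and, Finset.mem_map,
      Equiv.coe_toEmbedding]
    constructor
    · intro h; exact ⟨φ u, h, φ.symm_apply_apply u⟩
    · rintro ⟨j, hj, rfl⟩; rwa [Equiv.apply_symm_apply]
  rw [h1, Finset.card_map]
  have h2 : (Finset.univ.filter fun j : Fin n => (j : ℕ) < i)
      = (Finset.range i).attachFin (fun m hm => lt_of_lt_of_le (Finset.mem_range.mp hm) hi) := by
    ext j
    simp [Finset.mem_attachFin]
  rw [h2, Finset.card_attachFin, Finset.card_range]

lemma tendsto_bound (b : ℝ) (hb : 0 < b) (c : ℝ) (hc : c < 1/2) :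
    Tendsto (fun x : ℝ => x * Real.log x + Real.log 2 - b * x ^ (2 - 2*c)) atTop atBot := by
  have hη : (0:ℝ) < 1 - 2*c := by linarith
  have h1 : Tendsto (fun x : ℝ => Real.log x / x ^ (1 - 2*c) - b) atTop (nhds (0 - b)) :=
    ((isLittleO_log_rpow_atTop hη).tendsto_div_nhds_zero).sub_const b
  have h2 : Tendsto (fun x : ℝ => x ^ (2 - 2*c)) atTop atTop :=
    tendsto_rpow_atTop (by linarith)
  have h3 : Tendsto (fun x : ℝ => x ^ (2 - 2*c) * (Real.log x / x ^ (1 - 2*c) - b))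
      atTop atBot := Tendsto.atTop_mul_neg (by linarith) h2 h1
  have h4 : Tendsto (fun x : ℝ => x ^ (2 - 2*c) * (Real.log x / x ^ (1 - 2*c) - b) + Real.log 2)
      atTop atBot := tendsto_atBot_add_const_right _ _ h3
  apply h4.congr'
  filter_upwards [eventually_gt_atTop (0:ℝ)] with x hx
  have hxne : x ≠ 0 := ne_of_gt hx
  have hsplit : x ^ (2 - 2*c) = x ^ (1 - 2*c) * x := by
    rw [← Real.rpow_add_one hxne (1 - 2*c), show (1 - 2*c + 1) = 2 - 2*c by ring]
  have hpow : (0:ℝ) < x ^ (1 - 2*c) := Real.rpow_pos_of_pos hx _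
  rw [hsplit]
  field_simp
  ring

lemma eventually_bound (b : ℝ) (hb : 0 < b) (c : ℝ) (hc : c < 1/2) (T : ℝ) :
    ∀ᶠ n : ℕ in atTop,
      (n:ℝ) * Real.log n + Real.log 2 - b * (n:ℝ) ^ (2 - 2*c) ≤ T := by
  have h := (tendsto_bound b hb c hc).eventually_le_atBot T
  exact tendsto_natCast_atTop_atTop.eventually h

end ChernoffAux

set_option maxHeartbeats 2000000 in
/-- Gap theorem for edge bisection. -/
theorem stmt_12 (c : ℝ) (hc0 : 0 ≤ c) (hc : c < 1 / 2)
    (p : ℕ → ℝ≥0∞) (hp1 : ∀ n, p n ≤ 1)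
    (hΩ : ∃ K : ℝ, 0 < K ∧ ∀ᶠ n : ℕ in atTop, K * (n : ℝ) ^ (-c) ≤ (p n).toReal) :
    ∀ ε : ℝ, 0 < ε → ∀ δ : ℝ, 0 < δ → ∃ N : ℕ, ∀ n ≥ N,
      ENNReal.ofReal (1 - ε) <
        erMeasure n (p n) (hp1 n)
          {G | ((⨆ φ : Fin n ≃ Fin n, theta n G φ (n / 2) : ℕ) : ℝ)
            < (1 + δ) * ((⨅ φ : Fin n ≃ Fin n, theta n G φ (n / 2) : ℕ) : ℝ)} := by
  classical
  intro ε hε δ hδ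
  set γ : ℝ := δ / (2 * (2 + δ)) with hγdef
  have h2δ : (0:ℝ) < 2 + δ := by linarith
  have hγ : 0 < γ := div_pos hδ (by linarith)
  have hγmul : γ * (2 + δ) = δ / 2 := by
    rw [hγdef]; field_simp
  have hγδ : 1 + γ ≤ (1 + δ) * (1 - γ) := by nlinarith
  obtain ⟨K, hK, hKev⟩ := hΩ
  set b : ℝ := γ ^ 2 * K ^ 2 / 16 with hbdef
  have hb : 0 < b := by positivity
  have hmin : (0:ℝ) < min ε 1 / 2 := by
    have := lt_min hε one_pos; linarith
  set T : ℝ := Real.log (min ε 1 / 2) with hT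
  obtain ⟨N, hN⟩ := eventually_atTop.mp
    (hKev.and ((eventually_bound b hb c hc T).and (eventually_ge_atTop 2)))
  refine ⟨N, fun n hn => ?_⟩
  obtain ⟨hKn, hlogn, hn2⟩ := hN n hn
  have hn0 : (0:ℝ) < (n:ℝ) := by
    have : (0:ℕ) < n := by omega
    exact_mod_cast this
  set q : ℝ := (p n).toReal with hq
  have hq0 : 0 ≤ q := ENNReal.toReal_nonneg
  set μ := erMeasure n (p n) (hp1 n) with hμ
  haveI : IsProbabilityMeasure μ := by rw [hμ]; unfold erMeasure; infer_instance
  set m : ℕ := (n / 2) * (n - n / 2) with hmdef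
  have hcardA : ∀ φ : Fin n ≃ Fin n, (crossSet n (Lset n φ (n / 2))).card = m := by
    intro φ
    rw [card_crossSet, card_Lset n φ _ (Nat.div_le_self n 2)]
  set E : ℝ := Real.exp (-(γ ^ 2 * (m : ℝ) * q ^ 2 / 2)) with hE
  have hE0 : 0 < E := Real.exp_pos _
  set upSet : (Fin n ≃ Fin n) → Set (EdgeIdx n → Bool) := fun φ =>
    {G | (1 + γ) * (m : ℝ) * q ≤ ∑ e ∈ crossSet n (Lset n φ (n / 2)), ind (G e)} with hupSet
  set loSet : (Fin n ≃ Fin n) → Set (EdgeIdx n → Bool) := fun φ =>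
    {G | ∑ e ∈ crossSet n (Lset n φ (n / 2)), ind (G e) ≤ (1 - γ) * (m : ℝ) * q} with hloSet
  set bad : Set (EdgeIdx n → Bool) := ⋃ φ : Fin n ≃ Fin n, (upSet φ ∪ loSet φ) with hbad
  have hbadle : μ bad ≤ ENNReal.ofReal ((n.factorial : ℝ) * (2 * E)) := by
    calc μ bad ≤ ∑ φ : Fin n ≃ Fin n, μ (upSet φ ∪ loSet φ) :=
          measure_iUnion_fintype_le μ _
      _ ≤ ∑ _φ : Fin n ≃ Fin n, ENNReal.ofReal (2 * E) := by
          apply Finset.sum_le_sum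
          intro φ _
          refine (measure_union_le _ _).trans ?_
          have hu := tail_up n (p n) (hp1 n) (crossSet n (Lset n φ (n / 2))) γ hγ
          have hl := tail_lo n (p n) (hp1 n) (crossSet n (Lset n φ (n / 2))) γ hγ
          rw [hcardA φ] at hu hl
          have hub : μ (upSet φ) ≤ ENNReal.ofReal E :=
            (ENNReal.le_ofReal_iff_toReal_le (measure_ne_top _ _) hE0.le).mpr hu
          have hlb : μ (loSet φ) ≤ ENNReal.ofReal E :=
            (ENNReal.le_ofReal_iff_toReal_le (measure_ne_top _ _) hE0.le).mpr hl
          calc μ (upSet φ) + μ (loSet φ) ≤ ENNReal.ofReal E + ENNReal.ofReal E :=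
                add_le_add hub hlb
            _ = ENNReal.ofReal (2 * E) := by
                rw [← ENNReal.ofReal_add hE0.le hE0.le]; congr 1; ring
      _ = (Fintype.card (Fin n ≃ Fin n)) • ENNReal.ofReal (2 * E) := by
          rw [Finset.sum_const, Finset.card_univ]
      _ = ENNReal.ofReal ((n.factorial : ℝ) * (2 * E)) := by
          rw [Fintype.card_equiv (Equiv.refl _), Fintype.card_fin, nsmul_eq_mul,
            ← ENNReal.ofReal_natCast n.factorial,
            ← ENNReal.ofReal_mul (by positivity)]
  set β : ℝ := (n.factorial : ℝ) * (2 * E) with hβdef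
  have hβ0 : 0 ≤ β := by positivity
  have hβle : β ≤ min ε 1 / 2 := by
    have hk4 : n ≤ 4 * (n / 2) := by omega
    have hd2 : n ≤ 2 * (n - n / 2) := by omega
    have hm8' : (n : ℝ) ^ 2 / 8 ≤ (m : ℝ) := by
      have h1 := (Nat.cast_le (α := ℝ)).mpr hk4
      have h2 := (Nat.cast_le (α := ℝ)).mpr hd2
      push_cast at h1 h2
      have hmr : (m:ℝ) = ((n/2 : ℕ):ℝ) * ((n - n/2 : ℕ):ℝ) := by
        rw [hmdef, Nat.cast_mul]
      have h3 : (n:ℝ) * (n:ℝ) ≤ (4 * ((n/2 : ℕ):ℝ)) * (2 * ((n - n/2 : ℕ):ℝ)) :=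
        mul_le_mul h1 h2 (le_of_lt hn0) (by positivity)
      rw [hmr]; nlinarith
    have hnc : (0:ℝ) < (n : ℝ) ^ (-c) := Real.rpow_pos_of_pos hn0 _
    have hsq : (n:ℝ) ^ (-c) * (n:ℝ) ^ (-c) = (n:ℝ) ^ (-(2*c)) := by
      rw [← Real.rpow_add hn0]; congr 1; ring
    have hq2 : K ^ 2 * (n:ℝ) ^ (-(2*c)) ≤ q ^ 2 := by
      calc K ^ 2 * (n:ℝ) ^ (-(2*c)) = (K * (n:ℝ)^(-c)) * (K * (n:ℝ)^(-c)) := by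
            rw [← hsq]; ring
        _ ≤ q * q := mul_le_mul hKn hKn (by positivity) (le_trans (by positivity) hKn)
        _ = q ^ 2 := by ring
    have hrpow2 : (n:ℝ) ^ (2 - 2*c) = (n:ℝ) ^ 2 * (n:ℝ) ^ (-(2*c)) := by
      rw [← Real.rpow_natCast (n:ℝ) 2, ← Real.rpow_add hn0]
      congr 1
    have hbN : b * (n:ℝ) ^ (2 - 2*c) ≤ γ ^ 2 * (m : ℝ) * q ^ 2 / 2 := by
      have h3 : (n:ℝ) ^ 2 / 8 * (K ^ 2 * (n:ℝ) ^ (-(2*c))) ≤ (m:ℝ) * q ^ 2 :=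
        mul_le_mul hm8' hq2 (by positivity) (le_trans (by positivity) hm8')
      calc b * (n:ℝ) ^ (2 - 2*c)
          = γ ^ 2 / 2 * ((n:ℝ) ^ 2 / 8 * (K ^ 2 * (n:ℝ) ^ (-(2*c)))) := by
            rw [hrpow2, hbdef]; ring
        _ ≤ γ ^ 2 / 2 * ((m:ℝ) * q ^ 2) :=
            mul_le_mul_of_nonneg_left h3 (by positivity)
        _ = γ ^ 2 * (m : ℝ) * q ^ 2 / 2 := by ring
    have hfact : (n.factorial : ℝ) ≤ (n:ℝ) ^ (n:ℕ) := by
      exact_mod_cast Nat.factorial_le_pow n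
    have hpow_exp : ((n:ℝ)) ^ (n:ℕ) = Real.exp ((n:ℝ) * Real.log n) := by
      rw [← Real.log_pow, Real.exp_log (pow_pos hn0 n)]
    have hEb : E ≤ Real.exp (-(b * (n:ℝ) ^ (2 - 2*c))) := by
      rw [hE, Real.exp_le_exp]; linarith
    calc β ≤ (n:ℝ) ^ (n:ℕ) * (2 * Real.exp (-(b * (n:ℝ) ^ (2 - 2*c)))) := by
          apply mul_le_mul hfact (by nlinarith) (by positivity) (by positivity)
      _ = Real.exp ((n:ℝ) * Real.log n + Real.log 2 - b * (n:ℝ) ^ (2 - 2*c)) := by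
          rw [show (n:ℝ) * Real.log n + Real.log 2 - b * (n:ℝ) ^ (2 - 2*c)
              = ((n:ℝ) * Real.log n) + (Real.log 2 + -(b * (n:ℝ) ^ (2 - 2*c))) from by ring,
            Real.exp_add, Real.exp_add, Real.exp_log two_pos, hpow_exp]
      _ ≤ Real.exp T := by rw [Real.exp_le_exp]; exact hlogn
      _ = min ε 1 / 2 := Real.exp_log hmin
  have hβε : β < ε := by
    have : min ε 1 ≤ ε := min_le_left _ _
    linarith
  have hβ1 : β < 1 := by
    have : min ε 1 ≤ 1 := min_le_right _ _
    linarith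
  have hbadm : MeasurableSet bad := MeasurableSet.of_discrete
  have hsub : badᶜ ⊆ {G | ((⨆ φ : Fin n ≃ Fin n, theta n G φ (n / 2) : ℕ) : ℝ)
      < (1 + δ) * ((⨅ φ : Fin n ≃ Fin n, theta n G φ (n / 2) : ℕ) : ℝ)} := by
    intro G hG
    have hG' : ∀ φ : Fin n ≃ Fin n, G ∉ upSet φ ∪ loSet φ := by
      intro φ hmem
      exact hG (Set.mem_iUnion.mpr ⟨φ, hmem⟩)
    have hGlt : ∀ φ : Fin n ≃ Fin n,
        ∑ e ∈ crossSet n (Lset n φ (n / 2)), ind (G e) < (1 + γ) * (m : ℝ) * q := by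
      intro φ
      by_contra h
      push_neg at h
      exact hG' φ (Or.inl h)
    have hGgt : ∀ φ : Fin n ≃ Fin n,
        (1 - γ) * (m : ℝ) * q < ∑ e ∈ crossSet n (Lset n φ (n / 2)), ind (G e) := by
      intro φ
      by_contra h
      push_neg at h
      exact hG' φ (Or.inr h)
    obtain ⟨φM, hφM⟩ := Finite.exists_max (fun φ : Fin n ≃ Fin n => theta n G φ (n / 2))
    obtain ⟨φm, hφm⟩ := Finite.exists_min (fun φ : Fin n ≃ Fin n => theta n G φ (n / 2))
    have hsup : (⨆ φ : Fin n ≃ Fin n, theta n G φ (n / 2)) = theta n G φM (n / 2) :=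
      le_antisymm (ciSup_le hφM) (le_ciSup (f := fun φ : Fin n ≃ Fin n => theta n G φ (n / 2)) (Set.Finite.bddAbove (Set.finite_range _)) φM)
    have hinf : (⨅ φ : Fin n ≃ Fin n, theta n G φ (n / 2)) = theta n G φm (n / 2) :=
      le_antisymm (ciInf_le (OrderBot.bddBelow _) φm) (le_ciInf hφm)
    have hXM : (theta n G φM (n / 2) : ℝ)
        = ∑ e ∈ crossSet n (Lset n φM (n / 2)), ind (G e) := cut_eq_sum n _ G
    have hXm : (theta n G φm (n / 2) : ℝ)
        = ∑ e ∈ crossSet n (Lset n φm (n / 2)), ind (G e) := cut_eq_sum n _ G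
    simp only [Set.mem_setOf_eq, hsup, hinf, hXM, hXm]
    have hmq0 : 0 ≤ (m : ℝ) * q := by positivity
    calc ∑ e ∈ crossSet n (Lset n φM (n / 2)), ind (G e)
        < (1 + γ) * (m : ℝ) * q := hGlt φM
      _ ≤ (1 + δ) * ((1 - γ) * (m : ℝ) * q) := by nlinarith
      _ < (1 + δ) * ∑ e ∈ crossSet n (Lset n φm (n / 2)), ind (G e) := by
          have := hGgt φm
          nlinarith
  have hbadR : μ bad ≤ ENNReal.ofReal β := hbadle
  calc ENNReal.ofReal (1 - ε) < ENNReal.ofReal (1 - β) := by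
        rw [ENNReal.ofReal_lt_ofReal_iff (by linarith)]; linarith
    _ = 1 - ENNReal.ofReal β := by
        rw [ENNReal.ofReal_sub _ hβ0, ENNReal.ofReal_one]
    _ ≤ 1 - μ bad := tsub_le_tsub_left hbadR 1
    _ = μ badᶜ := by
        rw [measure_compl hbadm (measure_ne_top _ _), measure_univ]
    _ ≤ μ _ := measure_mono hsub
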